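/- arXiv:2206.06861 — 10 statements merged into one kernel-verified Lean document; each statement's English description precedes it below -/
import Mathlib

section
/- Let A, B be polynomials over ℂ, let z₁, …, zₙ be pairwise distinct complex numbers with B(zⱼ) ≠ 0 for every j, and set P(X) = ∏_{j=1}^n (X − zⱼ). If there exists a polynomial Q over ℂ such that B·P'' − A·P' − Q·P = 0 (identity of polynomials), then the points satisfy the Stieltjes–Bethe equations: for every j = 1, …, n, Σ_{ℓ ≠ j} 1/(zⱼ − z_ℓ) = A(zⱼ)/(2·B(zⱼ)). -/
open Polynomial Finset


private lemma derivative_finset_prod' {ι : Type*} [DecidableEq ι] (s : Finset ι)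
    (f : ι → Polynomial ℂ) :
    Polynomial.derivative (∏ i ∈ s, f i)
      = ∑ i ∈ s, (∏ j ∈ s.erase i, f j) * Polynomial.derivative (f i) := by
  classical
  induction s using Finset.induction_on with
  | empty => simp
  | @insert a s ha ih =>
    rw [Finset.prod_insert ha, Polynomial.derivative_mul, ih, Finset.sum_insert ha,
      Finset.erase_insert ha, Finset.mul_sum]
    congr 1
    · exact mul_comm _ _
    · apply Finset.sum_congr rfl
      intro i hi
      have hia : i ≠ a := fun h => ha (h ▸ hi)
      rw [Finset.erase_insert_of_ne (Ne.symm hia),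
        Finset.prod_insert (fun h => ha (Finset.mem_of_mem_erase h))]
      ring

/-- If `P = ∏ (X - zⱼ)` with pairwise distinct `zⱼ` (not roots of `B`)
satisfies a generalized Heine–Stieltjes equation `B·P'' − A·P' − Q·P = 0` for some
polynomial `Q`, then the points satisfy the Stieltjes–Bethe equations. -/
theorem stieltjes_bethe_of_heine_stieltjes
    (A B : Polynomial ℂ) (n : ℕ) (z : Fin n → ℂ)
    (hz : Function.Injective z) (hB : ∀ j, B.eval (z j) ≠ 0)
    (P : Polynomial ℂ) (hP : P = ∏ j, (X - C (z j)))
    (hQ : ∃ Q : Polynomial ℂ,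
      B * derivative (derivative P) - A * derivative P - Q * P = 0) :
    ∀ j, ∑ ℓ ∈ univ.erase j, 1 / (z j - z ℓ) = A.eval (z j) / (2 * B.eval (z j)) := by
  intro j
  obtain ⟨Q, hQ⟩ := hQ
  have hzne : ∀ ℓ, ℓ ≠ j → z j - z ℓ ≠ 0 := by
    intro ℓ hℓ
    exact sub_ne_zero.mpr (fun h => hℓ (hz h).symm)
  have h0 : eval (z j) P = 0 := by
    rw [hP, eval_prod]
    exact Finset.prod_eq_zero (mem_univ j) (by simp)
  have hP' : derivative P = ∑ k, ∏ ℓ ∈ univ.erase k, (X - C (z ℓ)) := by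
    rw [hP, derivative_finset_prod']
    simp [derivative_X_sub_C]
  have hP'' : derivative (derivative P)
      = ∑ k, ∑ m ∈ univ.erase k, ∏ ℓ ∈ (univ.erase k).erase m, (X - C (z ℓ)) := by
    rw [hP', derivative_sum]
    apply Finset.sum_congr rfl
    intro k _
    rw [derivative_finset_prod']
    simp [derivative_X_sub_C]
  have h1 : eval (z j) (derivative P) = ∏ ℓ ∈ univ.erase j, (z j - z ℓ) := by
    rw [hP', eval_finset_sum]
    rw [Finset.sum_eq_single j]
    · rw [eval_prod]; simp
    · intro k _ hk
      rw [eval_prod]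
      exact Finset.prod_eq_zero (Finset.mem_erase.mpr ⟨Ne.symm hk, mem_univ j⟩) (by simp)
    · simp
  have h2 : eval (z j) (derivative (derivative P))
      = 2 * ∑ m ∈ univ.erase j, ∏ ℓ ∈ (univ.erase j).erase m, (z j - z ℓ) := by
    rw [hP'']
    simp only [eval_finset_sum, eval_prod, eval_sub, eval_X, eval_C]
    rw [← Finset.add_sum_erase _ _ (mem_univ j)]
    have hrest : ∑ k ∈ univ.erase j, ∑ m ∈ univ.erase k,
          ∏ ℓ ∈ (univ.erase k).erase m, (z j - z ℓ)
        = ∑ k ∈ univ.erase j, ∏ ℓ ∈ (univ.erase j).erase k, (z j - z ℓ) := by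
      apply Finset.sum_congr rfl
      intro k hk
      have hkj : k ≠ j := (Finset.mem_erase.mp hk).1
      rw [Finset.sum_eq_single j]
      · congr 1
        exact Finset.erase_right_comm
      · intro m hm hmj
        exact Finset.prod_eq_zero
          (Finset.mem_erase.mpr ⟨Ne.symm hmj, Finset.mem_erase.mpr ⟨Ne.symm hkj, mem_univ j⟩⟩)
          (by simp)
      · intro hj
        exact absurd (Finset.mem_erase.mpr ⟨Ne.symm hkj, mem_univ j⟩) hj
    rw [hrest]
    ring
  have hode : B.eval (z j) * eval (z j) (derivative (derivative P))
      = A.eval (z j) * eval (z j) (derivative P) := by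
    have h := congrArg (eval (z j)) hQ
    simp only [eval_sub, eval_mul, eval_zero, h0, mul_zero] at h
    linear_combination h
  rw [h1, h2] at hode
  have hD : (∏ ℓ ∈ univ.erase j, (z j - z ℓ)) ≠ 0 :=
    Finset.prod_ne_zero_iff.mpr (fun ℓ hℓ => hzne ℓ (Finset.mem_erase.mp hℓ).1)
  have hsum : ∑ ℓ ∈ univ.erase j, 1 / (z j - z ℓ)
      = (∑ m ∈ univ.erase j, ∏ ℓ ∈ (univ.erase j).erase m, (z j - z ℓ))
        / ∏ ℓ ∈ univ.erase j, (z j - z ℓ) := by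
    rw [Finset.sum_div]
    apply Finset.sum_congr rfl
    intro m hm
    have hmj := (Finset.mem_erase.mp hm).1
    have hp : (∏ ℓ ∈ (univ.erase j).erase m, (z j - z ℓ)) ≠ 0 :=
      Finset.prod_ne_zero_iff.mpr
        (fun ℓ hℓ => hzne ℓ (Finset.mem_erase.mp (Finset.mem_of_mem_erase hℓ)).1)
    rw [← Finset.mul_prod_erase _ _ hm]
    rw [eq_div_iff (mul_ne_zero (hzne m hmj) hp)]
    rw [one_div]
    exact inv_mul_cancel_left₀ (hzne m hmj) _
  rw [hsum, div_eq_div_iff hD (mul_ne_zero two_ne_zero (hB j))]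
  linear_combination hode
end

section
/- Let A, B, Q, P be polynomials over ℂ with P satisfying the generalized Heine–Stieltjes equation B·P'' − A·P' − Q·P = 0. Suppose c ∈ ℂ is a common root of B and P, i.e. B(c) = 0 and P(c) = 0, and suppose that A(c) − k·B'(c) ≠ 0 for every natural number k = 0, 1, 2, …. Then P is the zero polynomial. -/
open Polynomial

/-- If `P` satisfies the generalized Heine–Stieltjes equation
`B·P'' − A·P' − Q·P = 0`, and `c` is a common root of `B` and `P` at which
`A(c) − k·B'(c) ≠ 0` for every natural number `k`, then `P` is the zero polynomial. -/
theorem zero_of_shared_root_heine_stieltjes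
    (A B Q P : Polynomial ℂ)
    (hODE : B * derivative (derivative P) - A * derivative P - Q * P = 0)
    (c : ℂ) (hBc : B.eval c = 0) (hPc : P.eval c = 0)
    (hgen : ∀ k : ℕ, A.eval c - (k : ℂ) * (derivative B).eval c ≠ 0) :
    P = 0 := by
  by_contra hP0
  set m := P.rootMultiplicity c with hm
  have hmpos : 0 < m := (P.rootMultiplicity_pos hP0).mpr hPc
  obtain ⟨n, hn⟩ : ∃ n, m = n + 1 := ⟨m - 1, (Nat.succ_pred_eq_of_pos hmpos).symm⟩
  obtain ⟨R, hPR⟩ : (X - C c) ^ m ∣ P := P.pow_rootMultiplicity_dvd c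
  have hRc : R.eval c ≠ 0 := by
    intro h
    have hdvd : (X - C c) ∣ R := dvd_iff_isRoot.mpr h
    obtain ⟨R', hR'⟩ := hdvd
    have : (X - C c) ^ (m + 1) ∣ P := ⟨R', by rw [hPR, hR', pow_succ]; ring⟩
    exact (P.pow_rootMultiplicity_not_dvd hP0 c) this
  obtain ⟨B1, hB1⟩ : (X - C c) ∣ B := dvd_iff_isRoot.mpr hBc
  set T : Polynomial ℂ := C ((n : ℂ) + 1) * R + (X - C c) * derivative R with hTdef
  have hT : derivative P = (X - C c) ^ n * T := by
    rw [hPR, hn, derivative_mul, derivative_pow, derivative_X_sub_C, Nat.add_sub_cancel,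
      hTdef]
    push_cast
    ring
  have hT2 : (X - C c) * derivative (derivative P) =
      (X - C c) ^ n * (C (n : ℂ) * T + (X - C c) * derivative T) := by
    rw [hT, derivative_mul, derivative_pow, derivative_X_sub_C]
    rcases n with _ | k
    · simp
    · rw [Nat.add_sub_cancel]
      push_cast
      ring
  set S : Polynomial ℂ :=
    B1 * (C (n : ℂ) * T + (X - C c) * derivative T) - A * T - Q * ((X - C c) * R) with hSdef
  have hE : (X - C c) ^ n * S = 0 := by
    have h1 : B * derivative (derivative P) =
        (X - C c) ^ n * (B1 * (C (n : ℂ) * T + (X - C c) * derivative T)) := by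
      calc B * derivative (derivative P)
          = B1 * ((X - C c) * derivative (derivative P)) := by rw [hB1]; ring
        _ = B1 * ((X - C c) ^ n * (C (n : ℂ) * T + (X - C c) * derivative T)) := by rw [hT2]
        _ = _ := by ring
    calc (X - C c) ^ n * S
        = B * derivative (derivative P) - A * derivative P - Q * P := by
          rw [h1, hT, hPR, hn, hSdef]; ring
      _ = 0 := hODE
  have hS : S = 0 := by
    have hpow : (X - C c) ^ n ≠ 0 := pow_ne_zero _ (X_sub_C_ne_zero c)
    exact (mul_eq_zero.mp hE).resolve_left hpow
  have hev := congrArg (eval c) hS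
  simp [hSdef, hTdef] at hev
  -- hev should say : B1.eval c * ((n) * ((n+1)*R.eval c)) - A.eval c * ((n+1)*R.eval c) = 0
  have hB' : (derivative B).eval c = B1.eval c := by
    rw [hB1, derivative_mul, derivative_X_sub_C]
    simp
  apply hgen n
  rw [hB']
  have hne : ((n : ℂ) + 1) * R.eval c ≠ 0 :=
    mul_ne_zero (Nat.cast_add_one_ne_zero n) hRc
  apply mul_left_cancel₀ hne
  rw [mul_zero]
  linear_combination -hev
end

section
/- Let μ : ℕ → ℂ be a sequence of moments and n ≥ 1. If D_{n,0} = det(μ_{i+j})_{0≤i,j≤n−1} = 0 and D_{n+1,0} = det(μ_{i+j})_{0≤i,j≤n} = 0, then the polynomial P_n(z), defined as the determinant of the (n+1)×(n+1) matrix whose rows with index 0 ≤ i ≤ n−1 are (μ_i, μ_{i+1}, …, μ_{i+n}) and whose last row is (1, z, …, z^n), is the identically zero polynomial. -/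
open Polynomial Matrix

private lemma coeff_sum_C_mul_X_pow (m : ℕ) (v : Fin m → ℂ) (k : Fin m) :
    (∑ i : Fin m, (C (v i) * X ^ (i : ℕ))).coeff (k : ℕ) = v k := by
  rw [Polynomial.finset_sum_coeff, Finset.sum_eq_single k]
  · simp
  · intro b _ hb
    have : (k : ℕ) ≠ (b : ℕ) := fun h => hb (Fin.val_injective h).symm
    simp [Polynomial.coeff_X_pow, this]
  · simp

/-- If both Hankel determinants `D_{n,0}` and `D_{n+1,0}` of the moments
vanish, then the determinantal polynomial `P_n` (with last row `1, z, …, zⁿ`) is the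
identically zero polynomial. -/
theorem det_polynomial_eq_zero_of_hankel_dets_eq_zero
    (μ : ℕ → ℂ) (n : ℕ) (hn : 1 ≤ n)
    (hDn : (Matrix.of fun i j : Fin n => μ ((i : ℕ) + (j : ℕ))).det = 0)
    (hDn1 : (Matrix.of fun i j : Fin (n + 1) => μ ((i : ℕ) + (j : ℕ))).det = 0) :
    (Matrix.of fun i j : Fin (n + 1) =>
      if (i : ℕ) < n then (C (μ ((i : ℕ) + (j : ℕ))) : Polynomial ℂ)
      else X ^ (j : ℕ)).det = 0 := by
  obtain ⟨c, hc0, hc⟩ := Matrix.exists_mulVec_eq_zero_iff.mpr hDn1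
  have hc' : ∀ i : Fin (n + 1), ∑ j : Fin (n + 1), μ ((i : ℕ) + (j : ℕ)) * c j = 0 := by
    intro i
    have := congrFun hc i
    simpa [Matrix.mulVec, dotProduct] using this
  by_cases hcn : c (Fin.last n) = 0
  · -- row relation: rows 0..n-1 are dependent via c
    apply Matrix.exists_vecMul_eq_zero_iff.mp
    refine ⟨fun i => C (c i), ?_, ?_⟩
    · intro h
      apply hc0
      funext i
      have := congrFun h i
      simpa using this
    · funext j
      have key : ∀ i : Fin (n + 1),
          C (c i) * (if (i : ℕ) < n then (C (μ ((i : ℕ) + (j : ℕ))) : Polynomial ℂ)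
            else X ^ (j : ℕ)) = C (c i * μ ((i : ℕ) + (j : ℕ))) := by
        intro i
        by_cases h : (i : ℕ) < n
        · simp [h, C_mul]
        · have hi : i = Fin.last n := by
            have := i.isLt
            apply Fin.ext
            simp only [Fin.val_last]
            omega
          rw [hi]
          simp [hcn]
      have hsum : ∑ i : Fin (n + 1), c i * μ ((i : ℕ) + (j : ℕ)) = 0 := by
        have := hc' j
        calc ∑ i : Fin (n + 1), c i * μ ((i : ℕ) + (j : ℕ))
            = ∑ i : Fin (n + 1), μ ((j : ℕ) + (i : ℕ)) * c i := by
              refine Finset.sum_congr rfl fun i _ => ?_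
              rw [mul_comm, Nat.add_comm]
          _ = 0 := this
      simp only [Matrix.vecMul, dotProduct, Matrix.of_apply, Pi.zero_apply]
      rw [Finset.sum_congr rfl fun i _ => key i, ← map_sum, hsum, map_zero]
  · -- column relation
    obtain ⟨d, hd0, hd⟩ := Matrix.exists_mulVec_eq_zero_iff.mpr hDn
    have hd' : ∀ i : Fin n, ∑ j : Fin n, μ ((i : ℕ) + (j : ℕ)) * d j = 0 := by
      intro i
      have := congrFun hd i
      simpa [Matrix.mulVec, dotProduct] using this
    set cP : Polynomial ℂ := ∑ i : Fin (n + 1), C (c i) * X ^ (i : ℕ) with hcP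
    set dP : Polynomial ℂ := ∑ i : Fin n, C (d i) * X ^ (i : ℕ) with hdP
    set dt : Fin (n + 1) → ℂ := fun j =>
      if h : (j : ℕ) < n then d ⟨(j : ℕ), h⟩ else 0 with hdt
    have hdtsum : ∀ f : ℕ → ℂ → Polynomial ℂ,
        True := fun _ => trivial
    have hdtlast : dt (Fin.last n) = 0 := by simp [hdt]
    have hdtcast : ∀ i : Fin n, dt (Fin.castSucc i) = d i := by
      intro i
      simp [hdt, i.isLt]
    have hdP_ne : dP ≠ 0 := by
      intro h
      apply hd0
      funext i
      have := coeff_sum_C_mul_X_pow n d i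
      rw [← hdP, h] at this
      simpa using this.symm
    have sum_dt_X : ∑ j : Fin (n + 1), C (dt j) * X ^ (j : ℕ) = dP := by
      rw [Fin.sum_univ_castSucc]
      simp only [hdtlast, map_zero, zero_mul, add_zero]
      refine Finset.sum_congr rfl fun i _ => ?_
      rw [hdtcast i, Fin.coe_castSucc]
    have hdt' : ∀ i : Fin (n + 1), (i : ℕ) < n →
        ∑ j : Fin (n + 1), μ ((i : ℕ) + (j : ℕ)) * dt j = 0 := by
      intro i hi
      rw [Fin.sum_univ_castSucc]
      simp only [hdtlast, mul_zero, add_zero]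
      have : ∑ j : Fin n, μ ((i : ℕ) + ((Fin.castSucc j : Fin (n+1)) : ℕ)) * dt (Fin.castSucc j)
          = ∑ j : Fin n, μ (((⟨(i : ℕ), hi⟩ : Fin n) : ℕ) + (j : ℕ)) * d j := by
        refine Finset.sum_congr rfl fun j _ => ?_
        rw [hdtcast j, Fin.coe_castSucc]
      rw [this, hd' ⟨(i : ℕ), hi⟩]
    apply Matrix.exists_mulVec_eq_zero_iff.mp
    refine ⟨fun j => C (c j) * dP - C (dt j) * cP, ?_, ?_⟩
    · intro h
      have := congrFun h (Fin.last n)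
      simp only [hdtlast, map_zero, zero_mul, sub_zero, Pi.zero_apply] at this
      rcases mul_eq_zero.mp this with h1 | h2
      · exact hcn (by simpa using h1)
      · exact hdP_ne h2
    · funext i
      simp only [Matrix.mulVec, dotProduct, Matrix.of_apply, Pi.zero_apply]
      by_cases h : (i : ℕ) < n
      · simp only [h, if_true]
        have expand : ∀ j : Fin (n + 1),
            C (μ ((i : ℕ) + (j : ℕ))) * (C (c j) * dP - C (dt j) * cP)
              = (C (μ ((i : ℕ) + (j : ℕ)) * c j)) * dP
                - (C (μ ((i : ℕ) + (j : ℕ)) * dt j)) * cP := by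
          intro j
          rw [mul_sub, C_mul, C_mul]
          ring
        rw [Finset.sum_congr rfl fun j _ => expand j, Finset.sum_sub_distrib,
          ← Finset.sum_mul, ← Finset.sum_mul, ← map_sum, ← map_sum,
          hc' i, hdt' i h, map_zero, zero_mul, zero_mul, sub_zero]
      · simp only [h, if_false]
        have expand : ∀ j : Fin (n + 1),
            (X : Polynomial ℂ) ^ (j : ℕ) * (C (c j) * dP - C (dt j) * cP)
              = (C (c j) * X ^ (j : ℕ)) * dP - (C (dt j) * X ^ (j : ℕ)) * cP := by
          intro j; ring
        rw [Finset.sum_congr rfl fun j _ => expand j, Finset.sum_sub_distrib,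
          ← Finset.sum_mul, ← Finset.sum_mul, sum_dt_X, ← hcP]
        ring
end

section
/- Work in the polynomial ring R = ℂ[μ₀, μ₁, …, μ_{2n}] in 2n+1 indeterminates. Let H be the (n+1)×(n+1) Hankel matrix with entries H_{ij} = μ_{i+j} for 0 ≤ i, j ≤ n. For 0 ≤ j ≤ n let C_j denote the determinant of the n×n submatrix of H obtained by deleting the last row and the j-th column, let D_{n,0} denote the determinant of the top-left n×n submatrix of H, and let D_{n+1,0} = det H. Then for all 0 ≤ j, k ≤ n, the product C_j·C_k belongs to the ideal of R generated by D_{n,0} and D_{n+1,0}. -/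
set_option linter.unusedSectionVars false


open Matrix

section Helpers

variable {ι : Type*} [Fintype ι] [DecidableEq ι] {R : Type*} [CommRing R]

private lemma my_det_updateRow_zero (M : Matrix ι ι R) (r : ι) :
    (M.updateRow r 0).det = 0 := by
  have h := Matrix.det_updateRow_smul M r (0 : R) 0
  simpa using h

private lemma my_det_updateRow_sum {κ : Type*} (M : Matrix ι ι R) (r : ι)
    (s : Finset κ) (f : κ → ι → R) :
    (M.updateRow r (∑ x ∈ s, f x)).det = ∑ x ∈ s, (M.updateRow r (f x)).det := by
  classical
  induction s using Finset.induction_on with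
  | empty => simpa using my_det_updateRow_zero M r
  | @insert a s ha ih =>
      rw [Finset.sum_insert ha, Matrix.det_updateRow_add, ih, Finset.sum_insert ha]

private lemma my_updateRow_comm {κ : Type*} (M : Matrix ι κ R) {i j : ι} (h : i ≠ j)
    (a b : κ → R) :
    (M.updateRow i a).updateRow j b = (M.updateRow j b).updateRow i a := by
  ext r c
  simp only [Matrix.updateRow_apply]
  split_ifs <;> simp_all

private lemma my_updateRow_mul (B A : Matrix ι ι R) (r : ι) (w : ι → R) :
    (B.updateRow r w) * A = (B * A).updateRow r (w ᵥ* A) := by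
  ext i c
  by_cases h : i = r
  · subst h
    simp [Matrix.mul_apply, Matrix.vecMul, dotProduct, Matrix.updateRow_apply]
  · simp [Matrix.mul_apply, Matrix.updateRow_apply, h]

private lemma my_vecMul_perm (w : ι → R) (σ : Equiv.Perm ι) :
    w ᵥ* (σ.toPEquiv.toMatrix : Matrix ι ι R) = fun c => w (σ.symm c) := by
  funext c
  have key : ∀ x : ι, (σ.toPEquiv.toMatrix : Matrix ι ι R) x c
      = if x = σ.symm c then 1 else 0 := by
    intro x
    rw [PEquiv.toMatrix_apply, Equiv.toPEquiv_apply]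
    simp [Option.mem_def, eq_comm, Equiv.eq_symm_apply]
  simp only [Matrix.vecMul, dotProduct, key, mul_ite, mul_one, mul_zero]
  rw [Finset.sum_ite_eq' Finset.univ (σ.symm c) w]
  simp

private lemma det_key {i j : ι} (h : i ≠ j) (c d : ι) :
    (((1 : Matrix ι ι R).updateRow j (Pi.single d 1)).updateRow i (Pi.single c 1)).det
      = if c = i ∧ d = j then 1 else if c = j ∧ d = i then (-1 : R) else 0 := by
  set M := (((1 : Matrix ι ι R).updateRow j (Pi.single d 1)).updateRow i (Pi.single c 1))
    with hM
  have one_row : ∀ r : ι, (1 : Matrix ι ι R) r = Pi.single r 1 := fun r =>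
    funext fun s => Matrix.one_eq_pi_single
  have hMi : M i = Pi.single c 1 := Matrix.updateRow_self
  have hMj : M j = Pi.single d 1 := by
    rw [hM, Matrix.updateRow_ne (Ne.symm h), Matrix.updateRow_self]
  have hMo : ∀ r : ι, r ≠ i → r ≠ j → M r = Pi.single r 1 := by
    intro r h1 h2
    rw [hM, Matrix.updateRow_ne h1, Matrix.updateRow_ne h2, one_row]
  by_cases hci : c = i
  · by_cases hdj : d = j
    · rw [if_pos ⟨hci, hdj⟩]
      have hM1 : M = 1 := by
        ext r s
        by_cases h1 : r = i
        · rw [h1, hMi, hci, one_row]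
        · by_cases h2 : r = j
          · rw [h2, hMj, hdj, one_row]
          · rw [hMo r h1 h2, one_row]
      rw [hM1, Matrix.det_one]
    · rw [if_neg (fun hh => hdj hh.2), if_neg (fun hh => h (hci.symm.trans hh.1))]
      by_cases hdi : d = i
      · exact Matrix.det_zero_of_row_eq h (by rw [hMi, hMj, hci, hdi])
      · refine Matrix.det_zero_of_row_eq (show j ≠ d from fun hh => hdj hh.symm) ?_
        rw [hMj, hMo d hdi hdj]
  · rw [if_neg (fun hh => hci hh.1)]
    by_cases hcj : c = j
    · by_cases hdi : d = i
      · rw [if_pos ⟨hcj, hdi⟩]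
        have hM2 : M = (Equiv.swap i j).toPEquiv.toMatrix := by
          ext r s
          by_cases h1 : r = i
          · rw [h1, hMi, hcj]
            simp [PEquiv.toMatrix_apply, Equiv.toPEquiv_apply, Equiv.swap_apply_left,
              Pi.single_apply, Option.mem_def, eq_comm]
          · by_cases h2 : r = j
            · rw [h2, hMj, hdi]
              simp [PEquiv.toMatrix_apply, Equiv.toPEquiv_apply, Equiv.swap_apply_right,
                Pi.single_apply, Option.mem_def, eq_comm]
            · rw [hMo r h1 h2]
              simp [PEquiv.toMatrix_apply, Equiv.toPEquiv_apply,
                Equiv.swap_apply_of_ne_of_ne h1 h2, Pi.single_apply, Option.mem_def, eq_comm]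
        rw [hM2]
        have := Matrix.det_permutation (R := R) (Equiv.swap i j)
        rw [this, Equiv.Perm.sign_swap h]
        simp
      · rw [if_neg (fun hh => hdi hh.2)]
        by_cases hdj : d = j
        · exact Matrix.det_zero_of_row_eq h (by rw [hMi, hMj, hcj, hdj])
        · refine Matrix.det_zero_of_row_eq (show j ≠ d from fun hh => hdj hh.symm) ?_
          rw [hMj, hMo d hdi hdj]
    · rw [if_neg (fun hh => hcj hh.1)]
      refine Matrix.det_zero_of_row_eq (show i ≠ c from fun hh => hci hh.symm) ?_
      rw [hMi, hMo c hci hcj]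

private lemma det_double_updateRow_one {i j : ι} (h : i ≠ j) (a b : ι → R) :
    (((1 : Matrix ι ι R).updateRow i a).updateRow j b).det = a i * b j - a j * b i := by
  have ha : a = ∑ c : ι, a c • (Pi.single c 1 : ι → R) := by
    funext x; simp [Pi.single_apply]
  have hb : b = ∑ d : ι, b d • (Pi.single d 1 : ι → R) := by
    funext x; simp [Pi.single_apply]
  have inner : ∀ d : ι,
      (∑ c : ι, a c *
        (((1 : Matrix ι ι R).updateRow j (Pi.single d 1)).updateRow i (Pi.single c 1)).det)
      = if d = j then a i else if d = i then -(a j) else 0 := by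
    intro d
    by_cases hdj : d = j
    · subst hdj; rw [if_pos rfl]
      rw [Finset.sum_eq_single i]
      · rw [det_key h]; simp
      · intro c _ hc
        rw [det_key h]
        simp [hc, Ne.symm h]
      · simp
    · rw [if_neg hdj]
      by_cases hdi : d = i
      · subst hdi; rw [if_pos rfl]
        rw [Finset.sum_eq_single j]
        · rw [det_key h]; simp [Ne.symm h, h]
        · intro c _ hc
          rw [det_key h]
          simp [hc, h]
        · simp
      · rw [if_neg hdi]
        refine Finset.sum_eq_zero fun c _ => ?_
        rw [det_key h]
        simp [hdj, hdi]
  calc (((1 : Matrix ι ι R).updateRow i a).updateRow j b).det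
      = ∑ d : ι, b d *
          (((1 : Matrix ι ι R).updateRow i a).updateRow j (Pi.single d 1)).det := by
        conv_lhs => rw [hb]
        rw [my_det_updateRow_sum]
        simp only [Matrix.det_updateRow_smul, smul_eq_mul]
    _ = ∑ d : ι, b d * ∑ c : ι, a c *
          (((1 : Matrix ι ι R).updateRow j (Pi.single d 1)).updateRow i (Pi.single c 1)).det := by
        refine Finset.sum_congr rfl fun d _ => ?_
        rw [my_updateRow_comm _ h]
        congr 1
        conv_lhs => rw [ha]
        rw [my_det_updateRow_sum]
        simp only [Matrix.det_updateRow_smul, smul_eq_mul]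
    _ = ∑ d : ι, b d * (if d = j then a i else if d = i then -(a j) else 0) := by
        refine Finset.sum_congr rfl fun d _ => ?_
        rw [inner d]
    _ = a i * b j - a j * b i := by
        rw [← Finset.sum_subset (Finset.subset_univ ({j, i} : Finset ι))]
        · rw [Finset.sum_pair (Ne.symm h)]
          simp [h, Ne.symm h]
          ring
        · intro x _ hx
          simp only [Finset.mem_insert, Finset.mem_singleton, not_or] at hx
          simp [hx.1, hx.2]

/-- Jacobi-style identity: a `2×2` minor of the adjugate (rows `j, L`, columns `L, k`)
is congruent, modulo `det A`, to `adj A j k * adj A L L`. -/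
private lemma adj_two_by_two_mem [IsDomain R]
    (A : Matrix ι ι R) (hA : A.det ≠ 0) {j L k : ι} (hjL : j ≠ L) (hLk : L ≠ k) :
    ∃ b : R, adjugate A j L * adjugate A L k = adjugate A j k * adjugate A L L + A.det * b := by
  classical
  set σ' : Equiv.Perm ι := Equiv.swap j k with hσ'
  set P : Matrix ι ι R := σ'.toPEquiv.toMatrix with hP
  set E : R := (((A.submatrix σ' id).updateRow j (Pi.single j 1)).updateRow L
      (Pi.single L 1)).det with hE
  set s : R := ((Equiv.Perm.sign σ' : ℤ) : R) with hs
  have hrow : ∀ i : ι, (adjugate A i) ᵥ* A = A.det • (Pi.single i 1 : ι → R) := by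
    intro i
    rw [← Matrix.mul_apply_eq_vecMul, Matrix.adjugate_mul]
    funext t
    simp [Matrix.one_eq_pi_single]
  have hCA : (((P.updateRow j (adjugate A j)).updateRow L (adjugate A L)) * A)
      = (((A.submatrix σ' id).updateRow j (A.det • (Pi.single j 1 : ι → R))).updateRow L
          (A.det • (Pi.single L 1 : ι → R))) := by
    rw [my_updateRow_mul, my_updateRow_mul, PEquiv.toMatrix_toPEquiv_mul, hrow, hrow]
  have hdetC : ((P.updateRow j (adjugate A j)).updateRow L (adjugate A L)).det = A.det * E := by
    have h1 : ((P.updateRow j (adjugate A j)).updateRow L (adjugate A L)).det * A.det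
        = (A.det * E) * A.det := by
      rw [← Matrix.det_mul, hCA, Matrix.det_updateRow_smul, my_updateRow_comm _ hjL,
        Matrix.det_updateRow_smul, my_updateRow_comm _ (Ne.symm hjL), ← hE]
      ring
    exact mul_right_cancel₀ hA h1
  have hPP : P * P = 1 := by
    rw [hP, ← PEquiv.toMatrix_trans, ← Equiv.toPEquiv_trans, hσ', Equiv.swap_swap,
      Equiv.toPEquiv_refl, PEquiv.toMatrix_refl]
  have hCP : ((P.updateRow j (adjugate A j)).updateRow L (adjugate A L)) * P
      = (((1 : Matrix ι ι R).updateRow j (fun c => adjugate A j (σ' c))).updateRow L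
          (fun c => adjugate A L (σ' c))) := by
    rw [my_updateRow_mul, my_updateRow_mul, hPP, my_vecMul_perm, my_vecMul_perm]
    rw [hσ', Equiv.symm_swap]
  have hPdet : P.det = s := by
    rw [hP, hs]
    exact Matrix.det_permutation σ'
  have hdet2 : (A.det * E) * s = adjugate A j (σ' j) * adjugate A L (σ' L)
      - adjugate A j (σ' L) * adjugate A L (σ' j) := by
    rw [← hdetC, ← hPdet, ← Matrix.det_mul, hCP, det_double_updateRow_one hjL]
  have hσj : σ' j = k := Equiv.swap_apply_left j k
  have hσL : σ' L = L := Equiv.swap_apply_of_ne_of_ne (Ne.symm hjL) hLk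
  rw [hσj, hσL] at hdet2
  exact ⟨-(E * s), by linear_combination hdet2⟩

end Helpers

/-- In `R = ℂ[μ₀, …, μ_{2n}]`, with `H` the `(n+1)×(n+1)` Hankel matrix
of the indeterminates, the products `C_j·C_k` of the cofactors obtained by deleting
the last row and one column lie in the ideal generated by `D_{n,0}` (top-left `n×n`
minor) and `D_{n+1,0} = det H`. -/
theorem cofactor_products_mem_ideal_span_hankel
    (n : ℕ)
    (H : Matrix (Fin (n + 1)) (Fin (n + 1)) (MvPolynomial (Fin (2 * n + 1)) ℂ))
    (hH : ∀ i j : Fin (n + 1), H i j =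
      MvPolynomial.X ⟨(i : ℕ) + (j : ℕ), by have hi := i.isLt; have hj := j.isLt; omega⟩)
    (j k : Fin (n + 1)) :
    (H.submatrix Fin.castSucc j.succAbove).det * (H.submatrix Fin.castSucc k.succAbove).det ∈
      Ideal.span {(H.submatrix Fin.castSucc Fin.castSucc).det, H.det} := by
  classical
  have hsymm : Hᵀ = H := by
    ext a b
    have hidx : (⟨(b : ℕ) + (a : ℕ), by have := a.isLt; have := b.isLt; omega⟩ :
        Fin (2 * n + 1)) = ⟨(a : ℕ) + (b : ℕ), by have := a.isLt; have := b.isLt; omega⟩ := by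
      apply Fin.ext
      simp [Nat.add_comm]
    rw [Matrix.transpose_apply, hH, hH, hidx]
  -- `det H ≠ 0` : evaluate at the moments of the counting measure on `{0, 1, …, n}`.
  have hdet : H.det ≠ 0 := by
    intro h0
    have h1 : (MvPolynomial.eval
        (fun s : Fin (2 * n + 1) => ∑ t : Fin (n + 1), ((t : ℕ) : ℂ) ^ (s : ℕ))) H.det = 0 := by
      rw [h0, map_zero]
    rw [RingHom.map_det, RingHom.mapMatrix_apply] at h1
    have hmap : H.map (MvPolynomial.eval
          (fun s : Fin (2 * n + 1) => ∑ t : Fin (n + 1), ((t : ℕ) : ℂ) ^ (s : ℕ)))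
        = (Matrix.vandermonde (fun t : Fin (n + 1) => ((t : ℕ) : ℂ)))ᵀ *
            Matrix.vandermonde (fun t : Fin (n + 1) => ((t : ℕ) : ℂ)) := by
      ext a b
      simp [Matrix.map_apply, hH, Matrix.mul_apply, Matrix.vandermonde, pow_add]
    rw [hmap, Matrix.det_mul, Matrix.det_transpose] at h1
    have h2 : (Matrix.vandermonde (fun t : Fin (n + 1) => ((t : ℕ) : ℂ))).det ≠ 0 := by
      rw [Matrix.det_vandermonde]
      refine Finset.prod_ne_zero_iff.mpr fun a _ => Finset.prod_ne_zero_iff.mpr fun b hb => ?_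
      have hab : a < b := Finset.mem_Ioi.mp hb
      have hab' : (a : ℕ) < (b : ℕ) := hab
      exact sub_ne_zero.mpr (by exact_mod_cast hab'.ne')
    exact h2 (mul_self_eq_zero.mp h1)
  rcases eq_or_ne j (Fin.last n) with rfl | hj
  · rw [Fin.succAbove_last]
    exact Ideal.mul_mem_right _ _ (Ideal.subset_span (by simp))
  rcases eq_or_ne k (Fin.last n) with rfl | hk
  · rw [Fin.succAbove_last]
    exact Ideal.mul_mem_left _ _ (Ideal.subset_span (by simp))
  obtain ⟨b, hb⟩ := adj_two_by_two_mem H hdet hj (Ne.symm hk)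
  have e1 : adjugate H j (Fin.last n)
      = (-1 : MvPolynomial (Fin (2 * n + 1)) ℂ) ^ (n + (j : ℕ)) *
        (H.submatrix Fin.castSucc j.succAbove).det := by
    rw [Matrix.adjugate_fin_succ_eq_det_submatrix, Fin.succAbove_last, Fin.val_last]
  have e2 : adjugate H (Fin.last n) k
      = (-1 : MvPolynomial (Fin (2 * n + 1)) ℂ) ^ ((k : ℕ) + n) *
        (H.submatrix Fin.castSucc k.succAbove).det := by
    rw [Matrix.adjugate_fin_succ_eq_det_submatrix, Fin.succAbove_last, Fin.val_last]
    congr 1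
    rw [← Matrix.det_transpose (H.submatrix Fin.castSucc (Fin.succAbove k)),
      Matrix.transpose_submatrix, hsymm]
  have e3 : adjugate H (Fin.last n) (Fin.last n)
      = (H.submatrix Fin.castSucc Fin.castSucc).det := by
    rw [Matrix.adjugate_fin_succ_eq_det_submatrix, Fin.succAbove_last, Fin.val_last]
    rw [Even.neg_one_pow ⟨n, rfl⟩, one_mul]
  rw [e1, e2, e3] at hb
  set ε1 : MvPolynomial (Fin (2 * n + 1)) ℂ := (-1) ^ (n + (j : ℕ)) with hε1def
  set ε2 : MvPolynomial (Fin (2 * n + 1)) ℂ := (-1) ^ ((k : ℕ) + n) with hε2def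
  have hε1 : ε1 * ε1 = 1 := by rw [hε1def, ← mul_pow]; norm_num
  have hε2 : ε2 * ε2 = 1 := by rw [hε2def, ← mul_pow]; norm_num
  rw [Ideal.mem_span_pair]
  refine ⟨ε1 * ε2 * adjugate H j k, ε1 * ε2 * b, ?_⟩
  set Cj := (H.submatrix Fin.castSucc j.succAbove).det
  set Ck := (H.submatrix Fin.castSucc k.succAbove).det
  set D := (H.submatrix Fin.castSucc Fin.castSucc).det
  linear_combination (-(ε1 * ε2)) * hb + (Cj * Ck * ε2 * ε2) * hε1 + (Cj * Ck) * hε2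
end

section
/- Let μ : ℕ → ℂ be a sequence of moments and n ≥ 1. If D_{n,0} = det(μ_{i+j})_{0≤i,j≤n−1} = 0 and D_{n+1,0} = det(μ_{i+j})_{0≤i,j≤n} = 0, then D_{n+1,k} = 0 for every k ≥ 0, where D_{n+1,k} is the determinant of the (n+1)×(n+1) matrix whose rows with index 0 ≤ i ≤ n−1 are (μ_i, μ_{i+1}, …, μ_{i+n}) and whose last row is (μ_{n+k}, μ_{n+k+1}, …, μ_{2n+k}). -/
open Matrix

/-- If the Hankel determinants `D_{n,0}` and `D_{n+1,0}` both vanish,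
then `D_{n+1,k} = 0` for every `k ≥ 0`, where `D_{n+1,k}` is the determinant of the
`(n+1)×(n+1)` matrix with rows `(μ_i, …, μ_{i+n})` for `i < n` and last row
`(μ_{n+k}, …, μ_{2n+k})`. -/
theorem shifted_hankel_dets_eq_zero
    (μ : ℕ → ℂ) (n : ℕ) (hn : 1 ≤ n)
    (hDn : (Matrix.of fun i j : Fin n => μ ((i : ℕ) + (j : ℕ))).det = 0)
    (hDn1 : (Matrix.of fun i j : Fin (n + 1) => μ ((i : ℕ) + (j : ℕ))).det = 0) :
    ∀ k : ℕ,
      (Matrix.of fun i j : Fin (n + 1) =>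
        if (i : ℕ) < n then μ ((i : ℕ) + (j : ℕ)) else μ (n + k + (j : ℕ))).det = 0 := by
  -- the n × (n+1) "strip" matrix
  set A : Matrix (Fin n) (Fin (n + 1)) ℂ :=
    Matrix.of (fun (i : Fin n) (j : Fin (n + 1)) => μ ((i : ℕ) + (j : ℕ))) with hAdef
  -- Key claim: the rows of A are linearly dependent.
  have key : ∃ g : Fin n → ℂ, g ≠ 0 ∧ g ᵥ* A = 0 := by
    -- column kernel vector of the n × n Hankel matrix
    obtain ⟨c, hc0, hc⟩ := Matrix.exists_mulVec_eq_zero_iff.mpr hDn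
    set e : ℕ → ℂ := fun t => if h : t < n then c ⟨t, h⟩ else 0 with hedef
    have he_lt : ∀ (t : ℕ) (h : t < n), e t = c ⟨t, h⟩ := by
      intro t h; simp [hedef, h]
    have he_ge : ∀ (t : ℕ), n ≤ t → e t = 0 := by
      intro t h; simp [hedef, Nat.not_lt_of_le h]
    set c' : Fin (n + 1) → ℂ := fun j => e (j : ℕ) with hc'def
    have hc_row : ∀ m : Fin n, ∑ j : Fin n, μ ((m : ℕ) + (j : ℕ)) * c j = 0 := by
      intro m
      have := congrFun hc m
      simpa [Matrix.mulVec, dotProduct] using this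
    -- `c'` is in the kernel of A
    have hAc' : A *ᵥ c' = 0 := by
      funext i
      have : ∑ j : Fin (n + 1), μ ((i : ℕ) + (j : ℕ)) * c' j
          = ∑ j : Fin n, μ ((i : ℕ) + (j : ℕ)) * c j := by
        rw [Fin.sum_univ_castSucc]
        have hlast : c' (Fin.last n) = 0 := he_ge n le_rfl
        rw [hlast, mul_zero, add_zero]
        refine Finset.sum_congr rfl fun j _ => ?_
        have : c' (Fin.castSucc j) = c j := by
          show e ((Fin.castSucc j : Fin (n+1)) : ℕ) = c j
          rw [Fin.coe_castSucc, he_lt _ j.isLt]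
        rw [this, Fin.coe_castSucc]
      simp only [Matrix.mulVec, dotProduct, hAdef, Matrix.of_apply, Pi.zero_apply]
      rw [this, hc_row i]
    have hc'0 : c' ≠ 0 := by
      obtain ⟨i, hi⟩ := Function.ne_iff.mp hc0
      refine Function.ne_iff.mpr ⟨Fin.castSucc i, ?_⟩
      show e ((Fin.castSucc i : Fin (n+1)) : ℕ) ≠ 0
      rw [Fin.coe_castSucc, he_lt _ i.isLt]
      simpa using hi
    by_contra hcon
    push_neg at hcon
    -- rows independent ⟹ ker Aᵀ trivial
    have hker : LinearMap.ker Aᵀ.mulVecLin = ⊥ := by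
      rw [LinearMap.ker_eq_bot']
      intro g hg
      by_contra hg0
      exact hcon g hg0 (by rwa [Matrix.mulVecLin_apply, Matrix.mulVec_transpose] at hg)
    have hrankT : Aᵀ.rank = n := by
      have h := LinearMap.finrank_range_add_finrank_ker Aᵀ.mulVecLin
      rw [hker, finrank_bot, Module.finrank_fintype_fun_eq_card, Fintype.card_fin] at h
      simpa [Matrix.rank] using h
    have hrank : A.rank = n := by rw [← Matrix.rank_transpose]; exact hrankT
    have hkerdim : Module.finrank ℂ (LinearMap.ker A.mulVecLin) = 1 := by
      have h := LinearMap.finrank_range_add_finrank_ker A.mulVecLin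
      rw [Module.finrank_fintype_fun_eq_card, Fintype.card_fin] at h
      have hr : Module.finrank ℂ ↥(LinearMap.range A.mulVecLin) = n := hrank
      omega
    have hc'ker : c' ∈ LinearMap.ker A.mulVecLin := by
      rw [LinearMap.mem_ker, Matrix.mulVecLin_apply]; exact hAc'
    have hc'ne : (⟨c', hc'ker⟩ : LinearMap.ker A.mulVecLin) ≠ 0 := by
      intro h
      exact hc'0 (by simpa [Subtype.ext_iff] using h)
    have hone := (finrank_eq_one_iff_of_nonzero'
      (⟨c', hc'ker⟩ : LinearMap.ker A.mulVecLin) hc'ne).mp hkerdim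
    -- kernel vector from the (n+1) × (n+1) Hankel determinant
    obtain ⟨v, hv0, hv⟩ := Matrix.exists_mulVec_eq_zero_iff.mpr hDn1
    have hv_row : ∀ m : Fin (n + 1), ∑ j : Fin (n + 1), μ ((m : ℕ) + (j : ℕ)) * v j = 0 := by
      intro m
      have := congrFun hv m
      simpa [Matrix.mulVec, dotProduct] using this
    have hvker : v ∈ LinearMap.ker A.mulVecLin := by
      rw [LinearMap.mem_ker, Matrix.mulVecLin_apply]
      funext i
      have := hv_row (Fin.castSucc i)
      simpa [Matrix.mulVec, dotProduct, hAdef] using this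
    obtain ⟨b, hb⟩ := hone ⟨v, hvker⟩
    have hbv : b • c' = v := by simpa [Subtype.ext_iff] using hb
    have hbne : b ≠ 0 := by
      rintro rfl
      rw [zero_smul] at hbv
      exact hv0 hbv.symm
    -- the crucial extra relation: ∑ μ(n+j) c'_j = 0
    have hs0 : ∑ j : Fin (n + 1), μ (n + (j : ℕ)) * c' j = 0 := by
      have h := hv_row (Fin.last n)
      rw [← hbv] at h
      simp only [Fin.val_last, Pi.smul_apply, smul_eq_mul] at h
      have : b * ∑ j : Fin (n + 1), μ (n + (j : ℕ)) * c' j = 0 := by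
        rw [Finset.mul_sum, ← h]
        exact Finset.sum_congr rfl fun j _ => by ring
      exact (mul_eq_zero.mp this).resolve_left hbne
    -- the shifted vector d = (0, c) also lies in the kernel
    set d : Fin (n + 1) → ℂ := Fin.cons 0 (fun j : Fin n => c j) with hddef
    have hdker : d ∈ LinearMap.ker A.mulVecLin := by
      rw [LinearMap.mem_ker, Matrix.mulVecLin_apply]
      funext i
      have hsum : ∑ j : Fin (n + 1), μ ((i : ℕ) + (j : ℕ)) * d j
          = ∑ j : Fin n, μ (((i : ℕ) + 1) + (j : ℕ)) * c j := by
        rw [Fin.sum_univ_succ]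
        simp only [hddef, Fin.cons_zero, Fin.cons_succ, mul_zero, zero_add]
        refine Finset.sum_congr rfl fun j _ => ?_
        congr 2
        simp [Fin.val_succ]
        omega
      simp only [Matrix.mulVec, dotProduct, hAdef, Matrix.of_apply, Pi.zero_apply]
      rw [hsum]
      rcases Nat.lt_or_ge ((i : ℕ) + 1) n with h | h
      · exact hc_row ⟨(i : ℕ) + 1, h⟩
      · have hin : (i : ℕ) + 1 = n := le_antisymm (Nat.succ_le_of_lt i.isLt) h
        rw [hin]
        -- reduce hs0 to a Fin n sum
        have := hs0
        rw [Fin.sum_univ_castSucc] at this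
        have hlast : c' (Fin.last n) = 0 := he_ge n le_rfl
        rw [hlast, mul_zero, add_zero] at this
        rw [← this]
        refine Finset.sum_congr rfl fun j _ => ?_
        congr 1
        show c j = c' (Fin.castSucc j)
        rw [show c' (Fin.castSucc j) = e ((Fin.castSucc j : Fin (n+1)) : ℕ) from rfl,
          Fin.coe_castSucc, he_lt _ j.isLt]
    obtain ⟨a, ha⟩ := hone ⟨d, hdker⟩
    have had : a • c' = d := by simpa [Subtype.ext_iff] using ha
    -- contradiction at the top index of the support of c
    classical
    set S : Finset (Fin n) := Finset.univ.filter (fun i => c i ≠ 0) with hSdef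
    have hSne : S.Nonempty := by
      obtain ⟨i, hi⟩ := Function.ne_iff.mp hc0
      refine ⟨i, ?_⟩
      simp only [hSdef, Finset.mem_filter, Finset.mem_univ, true_and]
      simpa using hi
    set m : Fin n := S.max' hSne with hmdef
    have hm : c m ≠ 0 := by
      have := S.max'_mem hSne
      simpa [hSdef] using this
    have hmax : ∀ i : Fin n, c i ≠ 0 → i ≤ m := fun i hi =>
      S.le_max' i (by simp [hSdef, hi])
    have htop : e ((m : ℕ) + 1) = 0 := by
      rcases Nat.lt_or_ge ((m : ℕ) + 1) n with h | h
      · rw [he_lt _ h]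
        by_contra hne
        have := hmax ⟨(m : ℕ) + 1, h⟩ hne
        simp only [Fin.le_def, Fin.val_mk] at this
        omega
      · exact he_ge _ h
    have := congrFun had (Fin.succ m)
    simp only [Pi.smul_apply, smul_eq_mul, hddef, Fin.cons_succ] at this
    rw [show c' (Fin.succ m) = e ((Fin.succ m : Fin (n+1)) : ℕ) from rfl, Fin.val_succ,
      htop, mul_zero] at this
    exact hm this.symm
  -- conclude: every shifted determinant vanishes
  obtain ⟨g, hg0, hgA⟩ := key
  intro k
  rw [← Matrix.exists_vecMul_eq_zero_iff]
  classical
  refine ⟨fun i : Fin (n + 1) => if h : (i : ℕ) < n then g ⟨(i : ℕ), h⟩ else 0, ?_, ?_⟩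
  · obtain ⟨i, hi⟩ := Function.ne_iff.mp hg0
    refine Function.ne_iff.mpr ⟨Fin.castSucc i, ?_⟩
    simp only [Fin.coe_castSucc, i.isLt, dif_pos, Pi.zero_apply]
    simpa using hi
  · funext j
    have hgAj := congrFun hgA j
    simp only [Matrix.vecMul, dotProduct, hAdef, Matrix.of_apply, Pi.zero_apply] at hgAj ⊢
    rw [Fin.sum_univ_castSucc]
    have hlast : ¬ ((Fin.last n : Fin (n + 1)) : ℕ) < n := by simp
    rw [dif_neg hlast, zero_mul, add_zero]
    rw [← hgAj]
    refine Finset.sum_congr rfl fun i _ => ?_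
    have hi : ((Fin.castSucc i : Fin (n + 1)) : ℕ) < n := by simpa using i.isLt
    rw [dif_pos hi, if_pos hi]
    simp
end

section
/- Let μ : ℕ → ℂ be a sequence of moments, let M : ℂ[X] → ℂ be the linear functional with M[X^j] = μ_j for all j, and let P_n(X) be the determinant of the (n+1)×(n+1) matrix whose rows with index 0 ≤ i ≤ n−1 are (μ_i, μ_{i+1}, …, μ_{i+n}) and whose last row is (1, X, …, X^n). Then for every m ∈ ℕ, M[P_n·X^m] equals the determinant of the (n+1)×(n+1) matrix whose rows with index 0 ≤ i ≤ n−1 are (μ_i, μ_{i+1}, …, μ_{i+n}) and whose last row is (μ_m, μ_{m+1}, …, μ_{m+n}). In particular M[P_n·X^m] = 0 for every m ≤ n−1. -/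
open Polynomial Matrix

/-- For the moment functional `M` (with `M[X^j] = μ_j`) and the
determinantal polynomial `P_n`, one has
`M[P_n·X^m] = det` of the `(n+1)×(n+1)` matrix with rows `(μ_i, …, μ_{i+n})` for
`i < n` and last row `(μ_m, …, μ_{m+n})`; in particular `M[P_n·X^m] = 0` for
`m ≤ n − 1`. -/
theorem moment_functional_det_polynomial
    (μ : ℕ → ℂ) (n : ℕ)
    (M : Polynomial ℂ →ₗ[ℂ] ℂ) (hM : ∀ j : ℕ, M (X ^ j) = μ j)
    (P : Polynomial ℂ)
    (hP : P = (Matrix.of fun i j : Fin (n + 1) =>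
      if (i : ℕ) < n then (C (μ ((i : ℕ) + (j : ℕ))) : Polynomial ℂ)
      else X ^ (j : ℕ)).det) :
    ∀ m : ℕ,
      M (P * X ^ m) =
        (Matrix.of fun i j : Fin (n + 1) =>
          if (i : ℕ) < n then μ ((i : ℕ) + (j : ℕ)) else μ (m + (j : ℕ))).det ∧
      (m < n → M (P * X ^ m) = 0) := by
  intro m
  set A : Matrix (Fin (n + 1)) (Fin (n + 1)) (Polynomial ℂ) :=
    Matrix.of fun i j : Fin (n + 1) =>
      if (i : ℕ) < n then (C (μ ((i : ℕ) + (j : ℕ))) : Polynomial ℂ)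
      else X ^ (j : ℕ) with hA
  set B : Matrix (Fin (n + 1)) (Fin (n + 1)) ℂ :=
    Matrix.of fun i j : Fin (n + 1) =>
      if (i : ℕ) < n then μ ((i : ℕ) + (j : ℕ)) else μ (m + (j : ℕ)) with hB
  have main : M (P * X ^ m) = B.det := by
    rw [hP, Matrix.det_succ_row A (Fin.last n), Matrix.det_succ_row B (Fin.last n),
      Finset.sum_mul, map_sum]
    refine Finset.sum_congr rfl fun j _ => ?_
    have hsub : A.submatrix (Fin.last n).succAbove j.succAbove =
        (B.submatrix (Fin.last n).succAbove j.succAbove).map C := by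
      ext i k
      simp [hA, hB, Matrix.submatrix, Fin.succAbove_last, i.is_lt]
    set d : ℂ := (B.submatrix (Fin.last n).succAbove j.succAbove).det with hd
    have hdet : (A.submatrix (Fin.last n).succAbove j.succAbove).det = C d := by
      rw [hsub]; exact (RingHom.map_det C _).symm
    have hAj : A (Fin.last n) j = X ^ (j : ℕ) := by simp [hA]
    have hBj : B (Fin.last n) j = μ (m + (j : ℕ)) := by simp [hB]
    rw [hdet, hAj, hBj]
    have e : ((-1 : Polynomial ℂ) ^ ((Fin.last n : ℕ) + (j : ℕ)) * X ^ (j : ℕ) * C d) * X ^ m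
        = ((-1 : ℂ) ^ ((Fin.last n : ℕ) + (j : ℕ)) * d) • X ^ ((j : ℕ) + m) := by
      rw [Polynomial.smul_eq_C_mul, _root_.map_mul, map_pow, map_neg, _root_.map_one, pow_add]
      ring
    rw [e, _root_.map_smul, hM, smul_eq_mul]
    rw [Nat.add_comm (j : ℕ) m]
    ring
  refine ⟨main, fun hm => ?_⟩
  rw [main]
  apply Matrix.det_zero_of_row_eq (i := ⟨m, by omega⟩) (j := Fin.last n)
  · intro h
    have := congrArg Fin.val h
    simp at this
    omega
  · ext k
    simp [hB, hm]
end

section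
/- Let B be a nonconstant polynomial over ℂ, let k ≥ 1 be an integer, and let P be a polynomial over ℂ whose formal derivative satisfies P' = B^k. Suppose the roots z₁, …, zₙ of P (with n = k·deg B + 1) are pairwise distinct, so P = c·∏_{j=1}^n (X − zⱼ) for some constant c ≠ 0, and suppose B(zⱼ) ≠ 0 for every j. Then the points z₁, …, zₙ satisfy the Stieltjes–Bethe equations with A = k·B': for every j, Σ_{ℓ ≠ j} 1/(zⱼ − z_ℓ) = k·B'(zⱼ)/(2·B(zⱼ)). -/
open Polynomial Finset

private lemma deriv_prod_lin {ι : Type*} [DecidableEq ι] (s : Finset ι) (v : ι → ℂ) :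
    derivative (∏ i ∈ s, (X - C (v i))) = ∑ i ∈ s, ∏ ℓ ∈ s.erase i, (X - C (v ℓ)) := by
  simpa [Lagrange.nodal] using Lagrange.derivative_nodal (s := s) (v := v)

/-- If `P' = B^k` (with `B` nonconstant, `k ≥ 1`) and the
`n = k·deg B + 1` roots `z₁, …, zₙ` of `P` are pairwise distinct and avoid the roots
of `B`, then they satisfy the Stieltjes–Bethe equations with `A = k·B'`. -/
theorem stieltjes_bethe_family_for_A_eq_kB'
    (B : Polynomial ℂ) (hBdeg : 0 < B.natDegree)
    (k : ℕ) (hk : 1 ≤ k)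
    (P : Polynomial ℂ) (hP' : derivative P = B ^ k)
    (n : ℕ) (hn : n = k * B.natDegree + 1)
    (z : Fin n → ℂ) (hz : Function.Injective z)
    (c : ℂ) (hc : c ≠ 0)
    (hPfac : P = C c * ∏ j, (X - C (z j)))
    (hBz : ∀ j, B.eval (z j) ≠ 0) :
    ∀ j, ∑ ℓ ∈ univ.erase j, 1 / (z j - z ℓ) =
      (k : ℂ) * (derivative B).eval (z j) / (2 * B.eval (z j)) := by
  intro j
  set Q : Polynomial ℂ := ∏ i, (X - C (z i)) with hQ
  have hdne : ∀ ℓ ∈ univ.erase j, z j - z ℓ ≠ 0 := by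
    intro ℓ hℓ h
    exact (mem_erase.mp hℓ).1 (hz (sub_eq_zero.mp h).symm)
  have hD1 : derivative Q = ∑ i, ∏ ℓ ∈ univ.erase i, (X - C (z ℓ)) := by
    rw [hQ, deriv_prod_lin]
  set pj : ℂ := ∏ ℓ ∈ univ.erase j, (z j - z ℓ) with hpjdef
  have hpj : eval (z j) (derivative Q) = pj := by
    rw [hD1, eval_finset_sum, Finset.sum_eq_single j]
    · simp [hpjdef, eval_prod]
    · intro i _ hij
      rw [eval_prod]
      refine Finset.prod_eq_zero (mem_erase.mpr ⟨hij.symm, mem_univ j⟩) ?_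
      simp
    · simp
  have hpjne : pj ≠ 0 := Finset.prod_ne_zero_iff.mpr hdne
  set S : ℂ := ∑ m ∈ univ.erase j, ∏ ℓ ∈ (univ.erase j).erase m, (z j - z ℓ) with hSdef
  have hD2 : eval (z j) (derivative (derivative Q)) = 2 * S := by
    have hder : derivative (derivative Q)
        = ∑ i, ∑ m ∈ univ.erase i, ∏ ℓ ∈ (univ.erase i).erase m, (X - C (z ℓ)) := by
      rw [hD1, derivative_sum]
      exact Finset.sum_congr rfl fun i _ => deriv_prod_lin _ _
    rw [hder, eval_finset_sum, ← Finset.add_sum_erase _ _ (mem_univ j)]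
    have h2 : ∀ i ∈ univ.erase j,
        eval (z j) (∑ m ∈ univ.erase i, ∏ ℓ ∈ (univ.erase i).erase m, (X - C (z ℓ)))
          = ∏ ℓ ∈ (univ.erase j).erase i, (z j - z ℓ) := by
      intro i hi
      have hij : i ≠ j := (mem_erase.mp hi).1
      rw [eval_finset_sum, Finset.sum_eq_single j]
      · rw [eval_prod, Finset.erase_right_comm]
        simp
      · intro m hm hmj
        rw [eval_prod]
        refine Finset.prod_eq_zero
          (mem_erase.mpr ⟨hmj.symm, mem_erase.mpr ⟨hij.symm, mem_univ j⟩⟩) ?_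
        simp
      · intro h
        exact absurd (mem_erase.mpr ⟨hij.symm, mem_univ j⟩) h
    rw [Finset.sum_congr rfl h2]
    have h1 : eval (z j)
        (∑ m ∈ univ.erase j, ∏ ℓ ∈ (univ.erase j).erase m, (X - C (z ℓ))) = S := by
      rw [eval_finset_sum]
      simp [hSdef, eval_prod]
    rw [h1]
    ring
  have hBk : B ^ k = C c * derivative Q := by
    rw [← hP', hPfac, derivative_C_mul, hQ]
  have e1 : (B.eval (z j)) ^ k = c * pj := by
    have := congrArg (eval (z j)) hBk
    simpa [hpj] using this
  have e2 : (k : ℂ) * (B.eval (z j)) ^ (k - 1) * (derivative B).eval (z j) = c * (2 * S) := by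
    have := congrArg (fun p => eval (z j) (derivative p)) hBk
    simp only [derivative_pow, derivative_C_mul, eval_mul, eval_C, eval_pow, eval_natCast] at this
    rw [hD2] at this
    exact this
  have hsum : ∑ ℓ ∈ univ.erase j, 1 / (z j - z ℓ) = S / pj := by
    rw [eq_div_iff hpjne, Finset.sum_mul, hSdef]
    refine Finset.sum_congr rfl fun ℓ hℓ => ?_
    rw [one_div, inv_mul_eq_div, eq_comm, eq_div_iff (hdne ℓ hℓ), mul_comm]
    exact Finset.mul_prod_erase (univ.erase j) (fun m => z j - z m) hℓ
  rw [hsum]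
  have hB := hBz j
  rw [div_eq_div_iff hpjne (mul_ne_zero two_ne_zero hB)]
  refine mul_left_cancel₀ hc ?_
  calc c * (S * (2 * B.eval (z j))) = (c * (2 * S)) * B.eval (z j) := by ring
    _ = ((k : ℂ) * (B.eval (z j)) ^ (k - 1) * (derivative B).eval (z j)) * B.eval (z j) := by
        rw [← e2]
    _ = (k : ℂ) * (derivative B).eval (z j) * ((B.eval (z j)) ^ (k - 1) * B.eval (z j)) := by ring
    _ = (k : ℂ) * (derivative B).eval (z j) * (B.eval (z j)) ^ k := by
        rw [← pow_succ, Nat.sub_add_cancel hk]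
    _ = (k : ℂ) * (derivative B).eval (z j) * (c * pj) := by rw [e1]
    _ = c * ((k : ℂ) * (derivative B).eval (z j) * pj) := by ring
end

section
/- Let R be a commutative ring and M an n×n matrix over R with n ≥ 2. Let a < b be two row indices and c < d be two column indices. Then det M · det M^{{a,b};{c,d}} = det M^{{a};{c}} · det M^{{b};{d}} − det M^{{b};{c}} · det M^{{a};{d}}, where M^{J;K} denotes the square submatrix of M obtained by deleting the rows with indices in J and the columns with indices in K (the Desnanot–Jacobi identity). -/
open Matrix

set_option linter.unusedSectionVars false
set_option linter.unusedVariables false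
set_option maxHeartbeats 1000000




section Aux

variable {R : Type*} [CommRing R] {n : Type*} [DecidableEq n] [Fintype n]

private lemma updateCol_comm' (M : Matrix n n R) {c d : n} (h : c ≠ d) (v w : n → R) :
    (M.updateCol c v).updateCol d w = (M.updateCol d w).updateCol c v := by
  ext i k
  by_cases h1 : k = d <;> by_cases h2 : k = c <;>
    simp_all [Matrix.updateCol_apply]

private lemma det_updateCol_finset_sum (M : Matrix n n R) (j : n) {ι : Type*}
    (s : Finset ι) (f : ι → n → R) :
    (M.updateCol j (∑ i ∈ s, f i)).det = ∑ i ∈ s, (M.updateCol j (f i)).det := by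
  induction s using Finset.cons_induction with
  | empty =>
      simp only [Finset.sum_empty]
      exact Matrix.det_eq_zero_of_column_eq_zero j (by simp)
  | cons a s ha ih =>
      rw [Finset.sum_cons, Finset.sum_cons, ← ih, Matrix.det_updateCol_add]

private lemma det_updateCol_expand (M : Matrix n n R) (j : n) (v : n → R) :
    (M.updateCol j v).det = ∑ i, v i * (M.updateCol j (Pi.single i 1)).det := by
  have hv : v = ∑ i, v i • (Pi.single i (1 : R) : n → R) := by
    funext k
    simp [Pi.single_apply, mul_ite, Finset.sum_ite_eq]
  conv_lhs => rw [hv]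
  rw [det_updateCol_finset_sum]
  refine Finset.sum_congr rfl fun i _ => ?_
  rw [Matrix.det_updateCol_smul]

end Aux





section Aux2

variable {R : Type*} [CommRing R] {n : Type*} [DecidableEq n] [Fintype n]

private lemma det_double_single {c d : n} (hcd : c ≠ d) (i j : n) :
    (((1 : Matrix n n R).updateCol c (Pi.single i 1)).updateCol d (Pi.single j 1)).det
      = if i = c ∧ j = d then 1 else if i = d ∧ j = c then -1 else 0 := by
  by_cases hic : i = c
  · by_cases hjd : j = d
    · rw [if_pos ⟨hic, hjd⟩, hic, hjd]
      have h1 : (((1 : Matrix n n R).updateCol c (Pi.single c 1)).updateCol d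
          (Pi.single d 1)) = 1 := by
        ext k l
        by_cases h1 : l = d <;> by_cases h2 : l = c <;>
          simp_all [Matrix.updateCol_apply, Matrix.one_apply, Pi.single_apply, eq_comm]
      rw [h1, Matrix.det_one]
    · have h2 : ¬ (i = d ∧ j = c) := by rintro ⟨h1, -⟩; exact hcd (hic.symm.trans h1)
      rw [if_neg (by tauto), if_neg h2]
      by_cases hjc : j = c
      · refine Matrix.det_zero_of_column_eq hcd fun k => ?_
        simp [Matrix.updateCol_apply, hic, hjc, hcd, hcd.symm, Ne.symm hcd]
      · refine Matrix.det_zero_of_column_eq hjd fun k => ?_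
        simp [Matrix.updateCol_apply, hjd, hjc, Matrix.one_apply, Pi.single_apply, eq_comm]
  · by_cases hid : i = d
    · by_cases hjc : j = c
      · rw [if_neg (by tauto), if_pos ⟨hid, hjc⟩, hid, hjc]
        have h1 : (((1 : Matrix n n R).updateCol c (Pi.single d 1)).updateCol d
            (Pi.single c 1)) = (1 : Matrix n n R).submatrix id (Equiv.swap c d) := by
          ext k l
          by_cases h1 : l = d <;> by_cases h2 : l = c <;>
            simp_all [Matrix.updateCol_apply, Matrix.one_apply, Pi.single_apply,
              Matrix.submatrix_apply, Equiv.swap_apply_def, eq_comm]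
        rw [h1, Matrix.det_permute', Matrix.det_one, Equiv.Perm.sign_swap hcd]
        simp
      · rw [if_neg (by tauto), if_neg (by tauto)]
        by_cases hjd : j = d
        · refine Matrix.det_zero_of_column_eq hcd fun k => ?_
          simp [Matrix.updateCol_apply, hid, hjd, hcd, hcd.symm, Ne.symm hcd]
        · refine Matrix.det_zero_of_column_eq hjd fun k => ?_
          simp [Matrix.updateCol_apply, hjd, hjc, Matrix.one_apply, Pi.single_apply, eq_comm]
    · rw [if_neg (by tauto), if_neg (by tauto)]
      refine Matrix.det_zero_of_column_eq hic fun k => ?_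
      simp [Matrix.updateCol_apply, hic, hid, Matrix.one_apply, Pi.single_apply, eq_comm,
        hcd, Ne.symm hic, Ne.symm hid]

end Aux2



private lemma val_succAbove' {k : ℕ} (p : Fin (k + 1)) (i : Fin k) :
    ((p.succAbove i : Fin (k + 1)) : ℕ) = if (i : ℕ) < (p : ℕ) then (i : ℕ) else (i : ℕ) + 1 := by
  by_cases h : (i : ℕ) < (p : ℕ)
  · rw [Fin.succAbove_of_castSucc_lt _ _ (by simpa [Fin.lt_def] using h), if_pos h,
      Fin.coe_castSucc]
  · rw [Fin.succAbove_of_le_castSucc _ _ (by simp only [Fin.le_def, Fin.coe_castSucc]; omega),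
      if_neg h, Fin.val_succ]

private lemma succAbove_succAbove_comm' {m : ℕ} (a b : Fin (m + 2)) (hab : a < b)
    (a' b' : Fin (m + 1)) (ha : (a' : ℕ) = (a : ℕ)) (hb : (b' : ℕ) + 1 = (b : ℕ)) (k : Fin m) :
    a.succAbove (b'.succAbove k) = b.succAbove (a'.succAbove k) := by
  have hab' := Fin.lt_iff_val_lt_val.mp hab
  apply Fin.ext
  simp only [val_succAbove']
  split_ifs <;> omega


section Aux2
variable {R : Type*} [CommRing R] {n : Type*} [DecidableEq n] [Fintype n]

private lemma det_one_updateCol_two {c d : n} (hcd : c ≠ d) (v w : n → R) :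
    (((1 : Matrix n n R).updateCol c v).updateCol d w).det = v c * w d - v d * w c := by
  rw [det_updateCol_expand]
  have step : ∀ j : n, (((1 : Matrix n n R).updateCol c v).updateCol d
      (Pi.single j 1)).det = (if j = d then v c else 0) + (if j = c then -(v d) else 0) := by
    intro j
    rw [updateCol_comm' _ hcd, det_updateCol_expand]
    have step2 : ∀ i : n, v i * (((1 : Matrix n n R).updateCol d (Pi.single j 1)).updateCol c
        (Pi.single i 1)).det
        = (if i = c then (if j = d then v c else 0) else 0)
          + (if i = d then (if j = c then -(v d) else 0) else 0) := by
      intro i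
      rw [updateCol_comm' _ (Ne.symm hcd), det_double_single hcd]
      by_cases h1 : i = c <;> by_cases h2 : i = d <;> by_cases h3 : j = c <;>
        by_cases h4 : j = d <;> simp_all <;> ring
    rw [Finset.sum_congr rfl fun i _ => step2 i, Finset.sum_add_distrib]
    rw [Finset.sum_ite_eq' Finset.univ c fun i => (if j = d then v c else 0)]
    rw [Finset.sum_ite_eq' Finset.univ d fun i => (if j = c then -(v d) else 0)]
    simp
  rw [Finset.sum_congr rfl fun j _ => by rw [step j]]
  simp only [mul_add, mul_ite, mul_zero, Finset.sum_add_distrib]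
  rw [Finset.sum_ite_eq' Finset.univ d fun j => w j * v c]
  rw [Finset.sum_ite_eq' Finset.univ c fun j => w j * -(v d)]
  simp only [Finset.mem_univ, if_true]
  ring
end Aux2


private lemma neg_one_pow_congr_aux {R : Type*} [CommRing R] {s t : ℕ} (h : s % 2 = t % 2) :
    (-1 : R) ^ s = (-1) ^ t := by
  rw [neg_one_pow_eq_pow_mod_two, h, ← neg_one_pow_eq_pow_mod_two]

private lemma det_single_cols {R : Type*} [CommRing R] {m : ℕ}
    (M : Matrix (Fin (m + 2)) (Fin (m + 2)) R)
    (a b : Fin (m + 2)) (hab : a < b) (c d : Fin (m + 2)) (hcd : c < d)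
    (a' c' : Fin (m + 1)) (ha : (a' : ℕ) = (a : ℕ)) (hc : (c' : ℕ) = (c : ℕ)) :
    ((M.updateCol c (Pi.single a 1)).updateCol d (Pi.single b 1)).det
      = (-1 : R) ^ ((a : ℕ) + (b : ℕ) + (c : ℕ) + (d : ℕ)) *
        (M.submatrix (b.succAbove ∘ a'.succAbove) (d.succAbove ∘ c'.succAbove)).det := by
  have hab' := Fin.lt_iff_val_lt_val.mp hab
  have hcd' := Fin.lt_iff_val_lt_val.mp hcd
  have hbm := b.isLt
  have hdm := d.isLt
  set N := (M.updateCol c (Pi.single a 1)).updateCol d (Pi.single b 1) with hN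
  have hNc : ∀ i, N i c = (Pi.single a 1 : Fin (m + 2) → R) i := by
    intro i
    simp [hN, Matrix.updateCol_apply, (Fin.lt_iff_val_lt_val.mpr hcd').ne]
  rw [Matrix.det_succ_column N c]
  rw [Fintype.sum_eq_single a (fun i hi => by
    rw [hNc i, Pi.single_eq_of_ne hi, mul_zero, zero_mul])]
  rw [hNc a, Pi.single_eq_same, mul_one]
  -- second expansion
  set i0 : Fin (m + 1) := ⟨(b : ℕ) - 1, by omega⟩ with hi0
  set j0 : Fin (m + 1) := ⟨(d : ℕ) - 1, by omega⟩ with hj0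
  have hai0 : a.succAbove i0 = b := by
    apply Fin.ext; rw [val_succAbove']
    rw [if_neg (by simp [hi0]; omega)]
    simp [hi0]; omega
  have hcj0 : c.succAbove j0 = d := by
    apply Fin.ext; rw [val_succAbove']
    rw [if_neg (by simp [hj0]; omega)]
    simp [hj0]; omega
  set N1 := N.submatrix a.succAbove c.succAbove with hN1
  have hN1j0 : ∀ i, N1 i j0 = if i = i0 then 1 else 0 := by
    intro i
    have : N1 i j0 = (Pi.single b 1 : Fin (m + 2) → R) (a.succAbove i) := by
      rw [hN1, Matrix.submatrix_apply, hcj0, hN, Matrix.updateCol_self]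
    rw [this, Pi.single_apply]
    congr 1
    simp only [eq_iff_iff]
    constructor
    · intro h; rw [← hai0] at h; exact Fin.succAbove_right_injective h
    · intro h; rw [h, hai0]
  rw [Matrix.det_succ_column N1 j0]
  rw [Fintype.sum_eq_single i0 (fun i hi => by
    rw [hN1j0 i, if_neg hi, mul_zero, zero_mul])]
  rw [hN1j0 i0, if_pos rfl, mul_one]
  have hsub : N1.submatrix i0.succAbove j0.succAbove
      = M.submatrix (b.succAbove ∘ a'.succAbove) (d.succAbove ∘ c'.succAbove) := by
    ext i j
    have hyne_d : c.succAbove (j0.succAbove j) ≠ d := by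
      rw [← hcj0]
      intro h
      exact Fin.succAbove_ne j0 j (Fin.succAbove_right_injective h)
    have hyne_c : c.succAbove (j0.succAbove j) ≠ c := Fin.succAbove_ne c _
    simp only [Matrix.submatrix_apply, Function.comp_apply, hN1, hN,
      Matrix.updateCol_apply, if_neg hyne_d, if_neg hyne_c]
    rw [succAbove_succAbove_comm' a b hab a' i0 ha (by simp [hi0]; omega) i,
      succAbove_succAbove_comm' c d hcd c' j0 hc (by simp [hj0]; omega) j]
  rw [hsub]
  have : ((i0 : ℕ) + (j0 : ℕ)) = ((b : ℕ) - 1) + ((d : ℕ) - 1) := by simp [hi0, hj0]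
  rw [this, ← mul_assoc, ← pow_add]
  congr 1
  apply neg_one_pow_congr_aux
  omega



section A
variable {R : Type*} [CommRing R]

private lemma dj_mul {m : ℕ} (M : Matrix (Fin (m + 2)) (Fin (m + 2)) R)
    (a b : Fin (m + 2)) (hab : a < b) (c d : Fin (m + 2)) (hcd : c < d)
    (a' c' : Fin (m + 1)) (ha : (a' : ℕ) = (a : ℕ)) (hc : (c' : ℕ) = (c : ℕ)) :
    M.det * (M.det *
        (M.submatrix (b.succAbove ∘ a'.succAbove) (d.succAbove ∘ c'.succAbove)).det)
      = M.det * ((M.submatrix a.succAbove c.succAbove).det *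
            (M.submatrix b.succAbove d.succAbove).det -
          (M.submatrix b.succAbove c.succAbove).det *
            (M.submatrix a.succAbove d.succAbove).det) := by
  have hcd_ne : c ≠ d := hcd.ne
  set B := ((1 : Matrix (Fin (m + 2)) (Fin (m + 2)) R).updateCol c
      (fun i => adjugate M i a)).updateCol d (fun i => adjugate M i b) with hB
  have hMB : M * B = (M.updateCol c (M.det • (Pi.single a 1 : Fin (m + 2) → R))).updateCol d
      (M.det • (Pi.single b 1 : Fin (m + 2) → R)) := by
    ext i k
    rw [Matrix.mul_apply]
    by_cases hk : k = d
    · subst hk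
      simp only [hB, Matrix.updateCol_self]
      rw [← Matrix.mul_apply, Matrix.mul_adjugate]
      simp [Matrix.one_apply, Pi.single_apply]
    · by_cases hk2 : k = c
      · subst hk2
        have hBk : ∀ j, B j k = adjugate M j a := by
          intro j; rw [hB, Matrix.updateCol_apply, if_neg hk, Matrix.updateCol_self]
        simp only [hBk]
        rw [← Matrix.mul_apply, Matrix.mul_adjugate]
        simp [Matrix.one_apply, Pi.single_apply, hk]
      · simp only [hB, Matrix.updateCol_apply, if_neg hk, if_neg hk2]
        simp [Matrix.one_apply, mul_ite, Finset.sum_ite_eq', hk, hk2]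
  have h2 : (M * B).det = M.det * (M.det *
      (((M.updateCol c (Pi.single a 1)).updateCol d (Pi.single b 1)).det)) := by
    rw [hMB, Matrix.det_updateCol_smul,
      updateCol_comm' _ hcd_ne, Matrix.det_updateCol_smul,
      updateCol_comm' _ (Ne.symm hcd_ne)]
  have h3 : B.det = adjugate M c a * adjugate M d b - adjugate M d a * adjugate M c b :=
    det_one_updateCol_two hcd_ne _ _
  have e : M.det * B.det = (M * B).det := (Matrix.det_mul M B).symm
  rw [h3, h2, det_single_cols M a b hab c d hcd a' c' ha hc,
    Matrix.adjugate_fin_succ_eq_det_submatrix, Matrix.adjugate_fin_succ_eq_det_submatrix,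
    Matrix.adjugate_fin_succ_eq_det_submatrix, Matrix.adjugate_fin_succ_eq_det_submatrix] at e
  set S := (-1 : R) ^ ((a : ℕ) + (b : ℕ) + (c : ℕ) + (d : ℕ)) with hS
  set Xac := (M.submatrix a.succAbove c.succAbove).det
  set Xbd := (M.submatrix b.succAbove d.succAbove).det
  set Xad := (M.submatrix a.succAbove d.succAbove).det
  set Xbc := (M.submatrix b.succAbove c.succAbove).det
  set Dd := (M.submatrix (b.succAbove ∘ a'.succAbove) (d.succAbove ∘ c'.succAbove)).det
  have hf1 : (-1 : R) ^ ((a : ℕ) + (c : ℕ)) * ((-1) ^ ((b : ℕ) + (d : ℕ))) = S := by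
    rw [hS, ← pow_add]; congr 1; omega
  have hf2 : (-1 : R) ^ ((a : ℕ) + (d : ℕ)) * ((-1) ^ ((b : ℕ) + (c : ℕ))) = S := by
    rw [hS, ← pow_add]; congr 1; omega
  have hs : S * S = 1 := by
    rw [hS, ← pow_add]
    exact Even.neg_one_pow ⟨(a : ℕ) + (b : ℕ) + (c : ℕ) + (d : ℕ), by ring⟩
  linear_combination (-S) * e + (S * M.det * (Xac * Xbd)) * hf1 -
    (S * M.det * (Xad * Xbc)) * hf2 -
    (M.det * M.det * Dd - M.det * (Xac * Xbd - Xad * Xbc)) * hs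
end A


private lemma dj_cancelled {m : ℕ}
    (a b : Fin (m + 2)) (hab : a < b) (c d : Fin (m + 2)) (hcd : c < d)
    (a' c' : Fin (m + 1)) (ha : (a' : ℕ) = (a : ℕ)) (hc : (c' : ℕ) = (c : ℕ)) :
    (mvPolynomialX (Fin (m + 2)) (Fin (m + 2)) ℤ).det *
        ((mvPolynomialX (Fin (m + 2)) (Fin (m + 2)) ℤ).submatrix
          (b.succAbove ∘ a'.succAbove) (d.succAbove ∘ c'.succAbove)).det
      = ((mvPolynomialX (Fin (m + 2)) (Fin (m + 2)) ℤ).submatrix a.succAbove c.succAbove).det *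
            ((mvPolynomialX (Fin (m + 2)) (Fin (m + 2)) ℤ).submatrix b.succAbove d.succAbove).det -
          ((mvPolynomialX (Fin (m + 2)) (Fin (m + 2)) ℤ).submatrix b.succAbove c.succAbove).det *
            ((mvPolynomialX (Fin (m + 2)) (Fin (m + 2)) ℤ).submatrix a.succAbove d.succAbove).det :=
  mul_left_cancel₀ (det_mvPolynomialX_ne_zero _ ℤ)
    (dj_mul _ a b hab c d hcd a' c' ha hc)

/-- Desnanot–Jacobi identity: for an `n×n` matrix `M` (`n ≥ 2`,
here `n = m + 2`) over a commutative ring, two row indices `a < b` and two column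
indices `c < d`:
`det M · det M^{{a,b};{c,d}} = det M^{{a};{c}}·det M^{{b};{d}} − det M^{{b};{c}}·det M^{{a};{d}}`,
where deleting the rows `a < b` (resp. columns `c < d`) is realized by the strictly
monotone embedding `Fin m → Fin (m+2)` given by `b.succAbove ∘ a'.succAbove`
(with `a'` the copy of `a` in `Fin (m+1)`), whose image misses exactly `{a, b}`. -/
theorem desnanot_jacobi
    (R : Type*) [CommRing R] (m : ℕ)
    (M : Matrix (Fin (m + 2)) (Fin (m + 2)) R)
    (a b : Fin (m + 2)) (hab : a < b)
    (c d : Fin (m + 2)) (hcd : c < d) :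
    M.det *
      (M.submatrix
        (b.succAbove ∘ (⟨(a : ℕ), by
          have h1 := Fin.lt_iff_val_lt_val.mp hab; have h2 := b.isLt; omega⟩ :
            Fin (m + 1)).succAbove)
        (d.succAbove ∘ (⟨(c : ℕ), by
          have h1 := Fin.lt_iff_val_lt_val.mp hcd; have h2 := d.isLt; omega⟩ :
            Fin (m + 1)).succAbove)).det =
    (M.submatrix a.succAbove c.succAbove).det * (M.submatrix b.succAbove d.succAbove).det -
      (M.submatrix b.succAbove c.succAbove).det * (M.submatrix a.succAbove d.succAbove).det := by
  have key := dj_cancelled a b hab c d hcd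
    (⟨(a : ℕ), by have h1 := Fin.lt_iff_val_lt_val.mp hab; have h2 := b.isLt; omega⟩ : Fin (m + 1))
    (⟨(c : ℕ), by have h1 := Fin.lt_iff_val_lt_val.mp hcd; have h2 := d.isLt; omega⟩ : Fin (m + 1))
    rfl rfl
  set φ : MvPolynomial (Fin (m + 2) × Fin (m + 2)) ℤ →ₐ[ℤ] R :=
    MvPolynomial.aeval (fun p : Fin (m + 2) × Fin (m + 2) => M p.1 p.2) with hφ
  have hA : φ.mapMatrix (mvPolynomialX (Fin (m + 2)) (Fin (m + 2)) ℤ) = M :=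
    mvPolynomialX_mapMatrix_aeval ℤ M
  have hsub : ∀ (k : ℕ) (f : Fin k → Fin (m + 2)) (g : Fin k → Fin (m + 2)),
      φ (((mvPolynomialX (Fin (m + 2)) (Fin (m + 2)) ℤ).submatrix f g).det)
        = (M.submatrix f g).det := by
    intro k f g
    rw [AlgHom.map_det, AlgHom.mapMatrix_apply, ← Matrix.submatrix_map,
      ← AlgHom.mapMatrix_apply, hA]
  have h2 := congrArg φ key
  rw [_root_.map_mul, _root_.map_sub, _root_.map_mul, _root_.map_mul, AlgHom.map_det, hA] at h2
  rw [hsub, hsub, hsub, hsub, hsub] at h2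
  exact h2
end

section
/- The function Φ(λ) := ∫_ℝ e^{λx − x⁴/2} dx is well defined and infinitely differentiable for λ ∈ ℝ, and it satisfies the third-order differential equation 2·Φ'''(λ) = λ·Φ(λ) for every λ ∈ ℝ. -/
open MeasureTheory Real Filter Set Topology

noncomputable def FF (n : ℕ) (l : ℝ) : ℝ := ∫ x : ℝ, x ^ n * Real.exp (l * x - x ^ 4 / 2)

lemma exp_key (c x : ℝ) :
    Real.exp (c * |x| - x ^ 4 / 2) ≤ Real.exp (|c| + (|c| / 2 + 1) ^ 2 / 2) * Real.exp (-x ^ 2) := by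
  rw [← Real.exp_add]
  apply Real.exp_le_exp.2
  have h1 : c * |x| ≤ |c| * |x| := mul_le_mul_of_nonneg_right (le_abs_self c) (abs_nonneg x)
  have h2 : |x| ^ 2 = x ^ 2 := sq_abs x
  nlinarith [sq_nonneg (|x| - 1), sq_nonneg (x ^ 2 - (|c| / 2 + 1)), abs_nonneg c, abs_nonneg x]

lemma bound_integrable (c : ℝ) :
    Integrable (fun x : ℝ => Real.exp (c * |x| - x ^ 4 / 2)) := by
  apply Integrable.mono' ((integrable_exp_neg_mul_sq one_pos).const_mul
    (Real.exp (|c| + (|c| / 2 + 1) ^ 2 / 2)))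
  · exact (Continuous.rexp (by continuity)).aestronglyMeasurable
  · refine ae_of_all _ fun x => ?_
    rw [Real.norm_eq_abs, abs_of_pos (Real.exp_pos _)]
    simpa [neg_mul, one_mul] using exp_key c x

lemma key_bound (n : ℕ) (b l x : ℝ) (hl : |l| ≤ b) :
    |x ^ n * Real.exp (l * x - x ^ 4 / 2)| ≤ Real.exp ((n + b) * |x| - x ^ 4 / 2) := by
  rw [abs_mul, abs_of_pos (Real.exp_pos _), abs_pow]
  have h1 : |x| ^ n ≤ Real.exp ((n : ℝ) * |x|) := by
    rw [Real.exp_nat_mul]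
    exact pow_le_pow_left₀ (abs_nonneg x) (by linarith [Real.add_one_le_exp |x|]) n
  have h2 : Real.exp (l * x - x ^ 4 / 2) ≤ Real.exp (b * |x| - x ^ 4 / 2) := by
    apply Real.exp_le_exp.2
    have : l * x ≤ |l| * |x| := le_trans (le_abs_self _) (by rw [abs_mul])
    nlinarith [abs_nonneg x]
  calc |x| ^ n * Real.exp (l * x - x ^ 4 / 2)
      ≤ Real.exp ((n : ℝ) * |x|) * Real.exp (b * |x| - x ^ 4 / 2) :=
        mul_le_mul h1 h2 (Real.exp_pos _).le (Real.exp_pos _).le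
    _ = Real.exp ((n + b) * |x| - x ^ 4 / 2) := by rw [← Real.exp_add]; ring_nf

lemma integ (n : ℕ) (l : ℝ) :
    Integrable (fun x : ℝ => x ^ n * Real.exp (l * x - x ^ 4 / 2)) := by
  apply (bound_integrable (n + |l|)).mono'
  · exact ((continuous_pow n).mul (Continuous.rexp (by continuity))).aestronglyMeasurable
  · exact ae_of_all _ fun x => key_bound n (|l|) l x le_rfl

lemma ptderiv (n : ℕ) (x l : ℝ) :
    HasDerivAt (fun l : ℝ => x ^ n * Real.exp (l * x - x ^ 4 / 2))
      (x ^ (n + 1) * Real.exp (l * x - x ^ 4 / 2)) l := by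
  have h : HasDerivAt (fun l : ℝ => l * x - x ^ 4 / 2) x l :=
    (hasDerivAt_mul_const x).sub_const _
  have := (h.exp).const_mul (x ^ n)
  exact this.congr_deriv (by ring)

lemma hasDerivFF (n : ℕ) (l : ℝ) : HasDerivAt (FF n) (FF (n + 1) l) l := by
  have key := hasDerivAt_integral_of_dominated_loc_of_deriv_le (F := fun l x =>
      x ^ n * Real.exp (l * x - x ^ 4 / 2))
      (F' := fun l x => x ^ (n + 1) * Real.exp (l * x - x ^ 4 / 2))
      (x₀ := l) (bound := fun x => Real.exp (((n + 1 : ℕ) + (|l| + 1)) * |x| - x ^ 4 / 2))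
      (Metric.ball_mem_nhds l one_pos)
      (Eventually.of_forall fun l' =>
        ((continuous_pow n).mul (Continuous.rexp (by continuity))).aestronglyMeasurable)
      (integ n l)
      ((continuous_pow (n+1)).mul (Continuous.rexp (by continuity))).aestronglyMeasurable
      (ae_of_all _ fun x l' hl' => by
        have : |l'| ≤ |l| + 1 := by
          have := mem_ball_iff_norm.1 hl'
          rw [Real.norm_eq_abs] at this
          have := abs_sub_abs_le_abs_sub l' l
          linarith
        exact key_bound (n + 1) (|l| + 1) l' x this)
      (bound_integrable _)
      (ae_of_all _ fun x l' _ => ptderiv n x l')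
  exact key.2

lemma derivFF (n : ℕ) : deriv (FF n) = FF (n + 1) :=
  funext fun l => (hasDerivFF n l).deriv

lemma smoothFF (m : ℕ) : ∀ n : ℕ, ContDiff ℝ m (FF n) := by
  induction m with
  | zero =>
    intro n
    rw [show ((0 : ℕ) : WithTop ℕ∞) = 0 from rfl, contDiff_zero]
    have hd : Differentiable ℝ (FF n) := fun l => (hasDerivFF n l).differentiableAt
    exact hd.continuous
  | succ m ih =>
    intro n
    rw [show ((m + 1 : ℕ) : WithTop ℕ∞) = (m : WithTop ℕ∞) + 1 by push_cast; ring,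
      contDiff_succ_iff_deriv]
    refine ⟨fun l => (hasDerivFF n l).differentiableAt, by simp, ?_⟩
    rw [derivFF]
    exact ih (n + 1)

lemma tendsto_h (l : ℝ) :
    Tendsto (fun x : ℝ => Real.exp (l * x - x ^ 4 / 2)) (Filter.cocompact ℝ) (𝓝 0) := by
  have h0 : ∀ x : ℝ, 0 ≤ Real.exp (l * x - x ^ 4 / 2) := fun x => (Real.exp_pos _).le
  have hb : ∀ x : ℝ, Real.exp (l * x - x ^ 4 / 2) ≤
      Real.exp (|l| + (|l| / 2 + 1) ^ 2 / 2) * Real.exp (-x ^ 2) := by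
    intro x
    have h1 : Real.exp (l * x - x ^ 4 / 2) ≤ Real.exp (|l| * |x| - x ^ 4 / 2) := by
      apply Real.exp_le_exp.2
      have := le_trans (le_abs_self (l * x)) (le_of_eq (abs_mul l x))
      linarith
    have h2 := exp_key (|l|) x
    rw [abs_abs] at h2
    exact h1.trans h2
  apply squeeze_zero h0 hb
  rw [show (0 : ℝ) = Real.exp (|l| + (|l| / 2 + 1) ^ 2 / 2) * 0 by ring]
  apply Tendsto.const_mul
  apply Real.tendsto_exp_atBot.comp
  have habs : Tendsto (fun x : ℝ => |x|) (Filter.cocompact ℝ) atTop := by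
    exact (tendsto_norm_cocompact_atTop (E := ℝ))
  have hsq : Tendsto (fun x : ℝ => x ^ 2) (Filter.cocompact ℝ) atTop :=
    ((tendsto_pow_atTop (by norm_num : (2:ℕ) ≠ 0)).comp habs).congr fun x => by
      simp [sq_abs]
  exact tendsto_neg_atBot_iff.2 hsq

lemma ibp (l : ℝ) :
    ∫ x : ℝ, (l - 2 * x ^ 3) * Real.exp (l * x - x ^ 4 / 2) = 0 := by
  set h : ℝ → ℝ := fun x => Real.exp (l * x - x ^ 4 / 2) with hh
  have hderiv : ∀ x : ℝ, HasDerivAt h ((l - 2 * x ^ 3) * h x) x := by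
    intro x
    have h1 : HasDerivAt (fun x : ℝ => l * x - x ^ 4 / 2) (l - 2 * x ^ 3) x := by
      have := ((hasDerivAt_id x).const_mul l).sub ((hasDerivAt_pow 4 x).div_const 2)
      exact this.congr_deriv (by norm_num; ring)
    have := h1.exp
    convert this using 1
    ring
  have hint : Integrable (fun x : ℝ => (l - 2 * x ^ 3) * h x) := by
    have heq : (fun x : ℝ => (l - 2 * x ^ 3) * h x) =
        fun x => l * (x ^ 0 * Real.exp (l * x - x ^ 4 / 2)) -
          2 * (x ^ 3 * Real.exp (l * x - x ^ 4 / 2)) := by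
      funext x; simp [hh]; ring
    rw [heq]
    exact ((integ 0 l).const_mul l).sub ((integ 3 l).const_mul 2)
  have htop : Tendsto h atTop (𝓝 0) := (tendsto_h l).mono_left _root_.atTop_le_cocompact
  have hbot : Tendsto h atBot (𝓝 0) := (tendsto_h l).mono_left _root_.atBot_le_cocompact
  show ∫ x : ℝ, (l - 2 * x ^ 3) * h x = 0
  have hIoi : ∫ x in Ioi (0:ℝ), (l - 2 * x ^ 3) * h x = 0 - h 0 :=
    integral_Ioi_of_hasDerivAt_of_tendsto' (fun x _ => hderiv x) hint.integrableOn htop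
  have hIic : ∫ x in Iic (0:ℝ), (l - 2 * x ^ 3) * h x = h 0 - 0 :=
    integral_Iic_of_hasDerivAt_of_tendsto' (fun x _ => hderiv x) hint.integrableOn hbot
  rw [← intervalIntegral.integral_Iic_add_Ioi hint.integrableOn hint.integrableOn, hIoi, hIic]
  ring

/-- The generating function `Φ(λ) = ∫_ℝ e^{λx − x⁴/2} dx` of the
moments of the Freud weight is well defined (the integrand is integrable for every
`λ`), infinitely differentiable, and satisfies `2·Φ'''(λ) = λ·Φ(λ)` for all `λ`. -/
theorem freud_generating_function_ode :
    (∀ lam : ℝ, Integrable (fun x : ℝ => Real.exp (lam * x - x ^ 4 / 2))) ∧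
    (∀ n : ℕ, ContDiff ℝ n (fun lam : ℝ => ∫ x : ℝ, Real.exp (lam * x - x ^ 4 / 2))) ∧
    (∀ lam : ℝ,
      2 * iteratedDeriv 3 (fun l : ℝ => ∫ x : ℝ, Real.exp (l * x - x ^ 4 / 2)) lam =
        lam * ∫ x : ℝ, Real.exp (lam * x - x ^ 4 / 2)) := by
  have hPhi : (fun l : ℝ => ∫ x : ℝ, Real.exp (l * x - x ^ 4 / 2)) = FF 0 := by
    funext l; simp [FF]
  refine ⟨fun lam => ?_, fun n => ?_, fun lam => ?_⟩
  · simpa using integ 0 lam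
  · rw [hPhi]; exact smoothFF n 0
  · rw [hPhi, show (3:ℕ) = 2 + 1 from rfl, iteratedDeriv_succ, iteratedDeriv_succ,
      iteratedDeriv_succ, iteratedDeriv_zero, derivFF 0, derivFF 1, derivFF 2]
    have h := ibp lam
    have heq : (fun x : ℝ => (lam - 2 * x ^ 3) * Real.exp (lam * x - x ^ 4 / 2)) =
        fun x => lam * (x ^ 0 * Real.exp (lam * x - x ^ 4 / 2)) -
          2 * (x ^ 3 * Real.exp (lam * x - x ^ 4 / 2)) := by
      funext x; simp; ring
    rw [heq, integral_sub ((integ 0 lam).const_mul lam) ((integ 3 lam).const_mul 2),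
      integral_const_mul, integral_const_mul, sub_eq_zero] at h
    have hF0 : (∫ x : ℝ, Real.exp (lam * x - x ^ 4 / 2)) = FF 0 lam := by simp [FF]
    rw [hF0]
    rw [show (2:ℕ)+1 = 3 from rfl]
    simp only [FF]
    rw [← h]
end

section
/- Let A, B, P be polynomials over ℂ, let U ⊆ ℂ be open with B(z) ≠ 0 on U, and let θ : U → ℂ be analytic with θ'(z) = −(A(z) + B'(z))/B(z) on U. For an analytic function R on U define W_R := −(A + B')·P·R + B·(P'·R − P·R'). If R₊ and R₋ are two analytic functions on U whose difference is R₊ − R₋ = P·e^{θ}, then W_{R₊} = W_{R₋} identically on U. (This is the key computation showing that the Wronskian W of Proposition 3.2 has no jump discontinuities across the contours of integration.) -/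
open Polynomial

/-- With `θ` an analytic antiderivative of `−(A + B')/B` on an open set
`U` where `B ≠ 0`, the expression `W_R = −(A + B')·P·R + B·(P'·R − P·R')` is the same
for two analytic functions `R₊, R₋` on `U` whose difference is `R₊ − R₋ = P·e^θ`:
the Wronskian has no jump discontinuity across the contours of integration. -/
theorem wronskian_no_jump
    (A B P : Polynomial ℂ)
    (U : Set ℂ) (hU : IsOpen U) (hB : ∀ z ∈ U, B.eval z ≠ 0)
    (θ : ℂ → ℂ) (hθ : DifferentiableOn ℂ θ U)
    (hθ' : ∀ z ∈ U, deriv θ z = -((A.eval z + (derivative B).eval z) / B.eval z))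
    (Rp Rm : ℂ → ℂ)
    (hRp : DifferentiableOn ℂ Rp U) (hRm : DifferentiableOn ℂ Rm U)
    (hjump : ∀ z ∈ U, Rp z - Rm z = P.eval z * Complex.exp (θ z)) :
    ∀ z ∈ U,
      -((A.eval z + (derivative B).eval z) * P.eval z * Rp z) +
          B.eval z * ((derivative P).eval z * Rp z - P.eval z * deriv Rp z) =
        -((A.eval z + (derivative B).eval z) * P.eval z * Rm z) +
          B.eval z * ((derivative P).eval z * Rm z - P.eval z * deriv Rm z) := by
  intro z hz
  have hzU : U ∈ nhds z := hU.mem_nhds hz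
  have hθz : DifferentiableAt ℂ θ z := hθ.differentiableAt hzU
  have hg : HasDerivAt (fun w => P.eval w * Complex.exp (θ w))
      ((derivative P).eval z * Complex.exp (θ z)
        + P.eval z * (Complex.exp (θ z) * deriv θ z)) z :=
    (P.hasDerivAt z).mul (hθz.hasDerivAt.cexp)
  have heq : Rp =ᶠ[nhds z] fun w => Rm w + P.eval w * Complex.exp (θ w) := by
    filter_upwards [hzU] with w hw
    linear_combination hjump w hw
  have hRmz : DifferentiableAt ℂ Rm z := hRm.differentiableAt hzU
  have hderiv : deriv Rp z = deriv Rm z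
      + ((derivative P).eval z * Complex.exp (θ z)
        + P.eval z * (Complex.exp (θ z) * deriv θ z)) := by
    rw [heq.deriv_eq]
    exact (hRmz.hasDerivAt.add hg).deriv
  have hRpRm := hjump z hz
  have hRpz : Rp z = Rm z + P.eval z * Complex.exp (θ z) := by linear_combination hRpRm
  rw [hderiv, hRpz, hθ' z hz]
  field_simp [hB z hz]
  ring
end
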